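/- Asymptotic efficiency of learned conditional thresholds (Theorem 3, limit part): Assume (A1)–(A4) and fix α ∈ (0,1). Let 𝓧 be a measurable space, ψ : 𝓧 → ℝ measurable, X a random element of 𝓧 defined on a probability space (Ω₂, P₂), and define λ*(x) := F_{ψ(x)}^{-1}(1−α). For each N ∈ ℕ, let λ̂_N : Ω₁ × 𝓧 → [0,1] be jointly measurable, where (Ω₁, P₁) is a probability space carrying the calibration randomness independent of X (expectations are with respect to the product measure P₁ ⊗ P₂). Suppose sup_{x ∈ 𝓧} |λ̂_N(ω₁, x) − λ*(x)| → 0 in P₁-probability as N → ∞. Let λ̄ ∈ [0,1] satisfy E[F_{ψ(X)}(λ̄)] = 1−α. Then lim_{N→∞} E[G_{ψ(X)}(λ̂_N(X))] = E[G_{ψ(X)}(λ*(X))] ≤ E[G_{ψ(X)}(λ̄)]. -/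

import Mathlib

open MeasureTheory Set Filter

open scoped Classical Topology

/-- Generalized inverse `F_t⁻¹(u) := inf {λ ∈ [0,1] : F t λ ≥ u}`, with the
convention that the infimum of the empty set is `1`. -/
noncomputable def genInv (F : ℝ → ℝ → ℝ) (t u : ℝ) : ℝ :=
  if ({l : ℝ | l ∈ Set.Icc (0 : ℝ) 1 ∧ u ≤ F t l}).Nonempty then
    sInf {l : ℝ | l ∈ Set.Icc (0 : ℝ) 1 ∧ u ≤ F t l}
  else 1

/-- `C_t(u) := G_t(F_t⁻¹(u))`. -/
noncomputable def accFrac (F G : ℝ → ℝ → ℝ) (t u : ℝ) : ℝ :=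
  G t (genInv F t u)

lemma genInv_mem_Icc (F : ℝ → ℝ → ℝ) (t u : ℝ) : genInv F t u ∈ Icc (0:ℝ) 1 := by
  rw [genInv]
  split_ifs with h
  · obtain ⟨l, hl⟩ := h
    constructor
    · exact le_csInf ⟨l, hl⟩ fun x hx => hx.1.1
    · exact (csInf_le ⟨0, fun x hx => hx.1.1⟩ hl).trans hl.1.2
  · exact ⟨zero_le_one, le_refl 1⟩

lemma genInv_comp {F : ℝ → ℝ → ℝ} {t : ℝ}
    (hmono : StrictMonoOn (F t) (Icc 0 1)) {l : ℝ} (hl : l ∈ Icc (0:ℝ) 1) :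
    genInv F t (F t l) = l := by
  have hS : {l' : ℝ | l' ∈ Set.Icc (0 : ℝ) 1 ∧ F t l ≤ F t l'} = Icc l 1 := by
    ext l'
    constructor
    · rintro ⟨hl', hle⟩
      refine ⟨?_, hl'.2⟩
      by_contra hlt
      push_neg at hlt
      exact absurd (hmono hl' hl hlt) (not_lt.2 hle)
    · rintro ⟨h1, h2⟩
      have hl' : l' ∈ Icc (0:ℝ) 1 := ⟨hl.1.trans h1, h2⟩
      exact ⟨hl', hmono.monotoneOn hl hl' h1⟩
  rw [genInv, hS, if_pos ⟨l, le_refl l, hl.2⟩, csInf_Icc hl.2]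

lemma exists_F_genInv {F : ℝ → ℝ → ℝ} {t : ℝ}
    (hcont : ContinuousOn (F t) (Icc 0 1)) (hmono : StrictMonoOn (F t) (Icc 0 1))
    (hF0 : F t 0 = 0) (hF1 : F t 1 = 1) {u : ℝ} (hu : u ∈ Ioo (0:ℝ) 1) :
    F t (genInv F t u) = u := by
  have : u ∈ Icc (F t 0) (F t 1) := by
    rw [hF0, hF1]; exact ⟨hu.1.le, hu.2.le⟩
  obtain ⟨l, hl, hFl⟩ := intermediate_value_Icc zero_le_one hcont this
  rw [← hFl, genInv_comp hmono hl]

lemma genInv_mono_t {F : ℝ → ℝ → ℝ}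
    (hA2 : ∀ l ∈ Icc (0 : ℝ) 1, Antitone fun t => F t l) (u : ℝ) :
    Monotone (fun t => genInv F t u) := by
  intro t t' htt'
  simp only [genInv]
  by_cases h' : ({l : ℝ | l ∈ Set.Icc (0 : ℝ) 1 ∧ u ≤ F t' l}).Nonempty
  · have hsub : {l : ℝ | l ∈ Set.Icc (0 : ℝ) 1 ∧ u ≤ F t' l} ⊆
        {l : ℝ | l ∈ Set.Icc (0 : ℝ) 1 ∧ u ≤ F t l} :=
      fun l hl => ⟨hl.1, hl.2.trans (hA2 l hl.1 htt')⟩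
    rw [if_pos h', if_pos (h'.mono hsub)]
    exact csInf_le_csInf ⟨0, fun x hx => hx.1.1⟩ h' hsub
  · rw [if_neg h']
    have := genInv_mem_Icc F t u
    rw [genInv] at this
    split_ifs with h
    · rw [if_pos h] at this
      exact this.2
    · exact le_refl 1

/-- Tangent line inequality for a convex function differentiable at an interior point. -/
lemma convex_tangent_le {C : ℝ → ℝ} (hC : ConvexOn ℝ (Icc 0 1) C)
    {v : ℝ} (hv : v ∈ Ioo (0:ℝ) 1) (hd : DifferentiableAt ℝ C v)
    {u : ℝ} (hu : u ∈ Icc (0:ℝ) 1) :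
    C v + deriv C v * (u - v) ≤ C u := by
  have hvI : v ∈ Icc (0:ℝ) 1 := ⟨hv.1.le, hv.2.le⟩
  rcases lt_trichotomy u v with h | h | h
  · have := hC.slope_le_deriv hu hvI h hd
    rw [slope_def_field] at this
    have hvu : 0 < v - u := by linarith
    rw [div_le_iff₀ hvu] at this
    nlinarith
  · subst h; simp
  · have := hC.deriv_le_slope hvI hu h hd
    rw [slope_def_field] at this
    have hvu : 0 < u - v := by linarith
    rw [le_div_iff₀ hvu] at this
    nlinarith

/-- Derivative bound for a [0,1]-bounded convex function. -/
lemma convex_deriv_abs_le {C : ℝ → ℝ} (hC : ConvexOn ℝ (Icc 0 1) C)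
    (hCr : ∀ u ∈ Icc (0:ℝ) 1, C u ∈ Icc (0:ℝ) 1)
    {v : ℝ} (hv : v ∈ Ioo (0:ℝ) 1) (hd : DifferentiableAt ℝ C v) :
    |deriv C v| ≤ 1/v + 1/(1-v) := by
  have h0 := convex_tangent_le hC hv hd (u := 0) ⟨le_refl 0, zero_le_one⟩
  have h1 := convex_tangent_le hC hv hd (u := 1) ⟨zero_le_one, le_refl 1⟩
  have hc0 := hCr 0 ⟨le_refl 0, zero_le_one⟩
  have hc1 := hCr 1 ⟨zero_le_one, le_refl 1⟩
  have hcv := hCr v ⟨hv.1.le, hv.2.le⟩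
  have hv0 : 0 < v := hv.1
  have hv1 : 0 < 1 - v := by linarith [hv.2]
  rw [abs_le]
  constructor
  · have h2 : -deriv C v ≤ 1 / v := by
      rw [le_div_iff₀ hv0]
      nlinarith [hc0.2, hcv.1]
    have h3 : (0:ℝ) ≤ 1/(1-v) := by positivity
    linarith
  · have h2 : deriv C v ≤ 1 / (1-v) := by
      rw [le_div_iff₀ hv1]
      nlinarith [hc1.2, hcv.1]
    have h3 : (0:ℝ) ≤ 1/v := by positivity
    linarith

/-- Lipschitz bound for a [0,1]-bounded convex function on an interior strip. -/
lemma convex_lipschitz {C : ℝ → ℝ} (hC : ConvexOn ℝ (Icc 0 1) C)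
    (hCr : ∀ u ∈ Icc (0:ℝ) 1, C u ∈ Icc (0:ℝ) 1)
    {δ u v : ℝ} (hδ : 0 < δ) (hu : u ∈ Icc δ (1-δ)) (hv : v ∈ Icc δ (1-δ)) :
    |C u - C v| ≤ |u - v| / δ := by
  have key : ∀ a b : ℝ, a ∈ Icc δ (1-δ) → b ∈ Icc δ (1-δ) → a < b →
      |C b - C a| ≤ (b - a) / δ := by
    intro a b ha hb hab
    have ha' : a ∈ Icc (0:ℝ) 1 := ⟨hδ.le.trans ha.1, ha.2.trans (by linarith)⟩
    have hb' : b ∈ Icc (0:ℝ) 1 := ⟨hδ.le.trans hb.1, hb.2.trans (by linarith)⟩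
    have h0 : (0:ℝ) ∈ Icc (0:ℝ) 1 := ⟨le_refl 0, zero_le_one⟩
    have h1 : (1:ℝ) ∈ Icc (0:ℝ) 1 := ⟨zero_le_one, le_refl 1⟩
    have ha0 : 0 < a := hδ.trans_le ha.1
    have hb1 : b < 1 := hb.2.trans_lt (by linarith)
    have hba : 0 < b - a := by linarith
    have slope1 := hC.slope_mono_adjacent h0 hb' ha0 hab
    have slope2 := hC.slope_mono_adjacent ha' h1 hab hb1
    rw [sub_zero, div_le_div_iff₀ ha0 hba] at slope1
    rw [div_le_div_iff₀ hba (by linarith : (0:ℝ) < 1 - b)] at slope2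
    have hc0 := hCr 0 h0
    have hc1 := hCr 1 h1
    have hca := hCr a ha'
    have hcb := hCr b hb'
    have L : -(b - a) ≤ (C b - C a) * δ := by
      rcases le_or_gt 0 (C b - C a) with h | h
      · nlinarith
      · have h2 : (C b - C a) * a ≤ (C b - C a) * δ :=
          mul_le_mul_of_nonpos_left ha.1 h.le
        have h3 : (-1) * (b - a) ≤ (C a - C 0) * (b - a) :=
          mul_le_mul_of_nonneg_right (by linarith [hca.1, hc0.2]) hba.le
        linarith
    have U : (C b - C a) * δ ≤ b - a := by
      rcases le_or_gt (C b - C a) 0 with h | h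
      · have := mul_nonpos_of_nonpos_of_nonneg h hδ.le
        linarith
      · have h2 : (C b - C a) * δ ≤ (C b - C a) * (1 - b) :=
          mul_le_mul_of_nonneg_left (by linarith [hb.2]) h.le
        have h3 : (C 1 - C b) * (b - a) ≤ 1 * (b - a) :=
          mul_le_mul_of_nonneg_right (by linarith [hc1.2, hcb.1]) hba.le
        linarith
    rw [abs_le]
    constructor
    · rw [← neg_div, div_le_iff₀ hδ]
      linarith
    · rw [le_div_iff₀ hδ]
      exact U
  rcases lt_trichotomy u v with h | h | h
  · rw [abs_sub_comm (C u), abs_sub_comm u, abs_of_pos (by linarith : (0:ℝ) < v - u)]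
    exact key u v hu hv h
  · subst h; simp
  · rw [abs_of_pos (by linarith : (0:ℝ) < u - v)]
    exact key v u hv hu h

/-- Chebyshev's correlation inequality for comonotone bounded functions. -/
lemma chebyshev_corr {Ω : Type*} [MeasurableSpace Ω] (μ : Measure Ω) [IsProbabilityMeasure μ]
    {f g : Ω → ℝ} (hf : Measurable f) (hg : Measurable g)
    {Mf Mg : ℝ} (hbf : ∀ ω, |f ω| ≤ Mf) (hbg : ∀ ω, |g ω| ≤ Mg)
    (hmono : ∀ s t, 0 ≤ (f s - f t) * (g s - g t)) :
    (∫ ω, f ω ∂μ) * (∫ ω, g ω ∂μ) ≤ ∫ ω, f ω * g ω ∂μ := by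
  have hbound : ∀ (a b : Ω), ‖f a * g b‖ ≤ Mf * Mg := by
    intro a b
    rw [Real.norm_eq_abs, abs_mul]
    exact mul_le_mul (hbf a) (hbg b) (abs_nonneg _) ((abs_nonneg (f a)).trans (hbf a))
  have hintAB : ∀ (φ χ : Ω × Ω → Ω), Measurable φ → Measurable χ →
      Integrable (fun z => f (φ z) * g (χ z)) (μ.prod μ) := by
    intro φ χ hφ hχ
    refine Integrable.mono' (integrable_const (Mf * Mg))
      ((hf.comp hφ).mul (hg.comp hχ)).aestronglyMeasurable
      (ae_of_all _ fun z => hbound (φ z) (χ z))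
  have h11 := hintAB Prod.fst Prod.fst measurable_fst measurable_fst
  have h22 := hintAB Prod.snd Prod.snd measurable_snd measurable_snd
  have h12 := hintAB Prod.fst Prod.snd measurable_fst measurable_snd
  have h21 := hintAB Prod.snd Prod.fst measurable_snd measurable_fst
  have key : 0 ≤ ∫ z, (f z.1 - f z.2) * (g z.1 - g z.2) ∂(μ.prod μ) :=
    integral_nonneg fun z => hmono z.1 z.2
  have expand : (fun z : Ω × Ω => (f z.1 - f z.2) * (g z.1 - g z.2)) =
      fun z => (f z.1 * g z.1 + f z.2 * g z.2) - f z.1 * g z.2 - f z.2 * g z.1 := by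
    funext z; ring
  have I3 : Integrable (fun z : Ω × Ω => f z.1 * g z.1 + f z.2 * g z.2 - f z.1 * g z.2)
      (μ.prod μ) := (h11.add h22).sub h12
  have I2 : Integrable (fun z : Ω × Ω => f z.1 * g z.1 + f z.2 * g z.2)
      (μ.prod μ) := h11.add h22
  rw [expand, integral_sub I3 h21, integral_sub I2 h12, integral_add h11 h22] at key
  have e11 : ∫ z : Ω × Ω, f z.1 * g z.1 ∂(μ.prod μ) = ∫ ω, f ω * g ω ∂μ := by
    have := integral_prod_mul (μ := μ) (ν := μ) (fun ω => f ω * g ω) (fun _ => (1:ℝ))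
    simpa using this
  have e22 : ∫ z : Ω × Ω, f z.2 * g z.2 ∂(μ.prod μ) = ∫ ω, f ω * g ω ∂μ := by
    have := integral_prod_mul (μ := μ) (ν := μ) (fun _ => (1:ℝ)) (fun ω => f ω * g ω)
    simpa using this
  have e12 : ∫ z : Ω × Ω, f z.1 * g z.2 ∂(μ.prod μ) =
      (∫ ω, f ω ∂μ) * (∫ ω, g ω ∂μ) := integral_prod_mul f g
  have e21 : ∫ z : Ω × Ω, f z.2 * g z.1 ∂(μ.prod μ) =
      (∫ ω, g ω ∂μ) * (∫ ω, f ω ∂μ) := by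
    have : (fun z : Ω × Ω => f z.2 * g z.1) = fun z => g z.1 * f z.2 := by
      funext z; ring
    rw [this]
    exact integral_prod_mul g f
  rw [e11, e22, e12, e21] at key
  linarith

section Claims

variable {F G : ℝ → ℝ → ℝ} {α : ℝ}

/-- The local "good at scale ε, β" predicate for a difficulty t. -/
def goodAt (F : ℝ → ℝ → ℝ) (α β ε t : ℝ) : Prop :=
  genInv F t (1 - α - β) ≤ max (genInv F t (1 - α) - ε) 0 ∧
    min (genInv F t (1 - α) + ε) 1 ≤ genInv F t (1 - α + β)

lemma goodAt_mono {β ε ε' t : ℝ} (hεε' : ε ≤ ε') (h : goodAt F α β ε' t) :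
    goodAt F α β ε t := by
  obtain ⟨h1, h2⟩ := h
  constructor
  · exact h1.trans (max_le_max (by linarith) (le_refl 0))
  · exact (min_le_min (by linarith) (le_refl 1)).trans h2

lemma claimA
    (hFrange : ∀ t : ℝ, ∀ l ∈ Icc (0 : ℝ) 1, F t l ∈ Icc (0 : ℝ) 1)
    (hGrange : ∀ t : ℝ, ∀ l ∈ Icc (0 : ℝ) 1, G t l ∈ Icc (0 : ℝ) 1)
    (hA1 : ∀ t : ℝ, ContinuousOn (F t) (Icc 0 1) ∧ StrictMonoOn (F t) (Icc 0 1) ∧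
      F t 0 = 0 ∧ F t 1 = 1)
    (hA3 : ∀ t : ℝ, ConvexOn ℝ (Icc 0 1) (accFrac F G t) ∧
      ∀ u ∈ Ioo (0 : ℝ) 1, DifferentiableAt ℝ (accFrac F G t) u)
    (hα : α ∈ Ioo (0 : ℝ) 1) {β ε : ℝ} (hβ0 : 0 < β)
    (hβδ : β ≤ min α (1 - α) / 2) {t : ℝ} (hgood : goodAt F α β ε t)
    {l : ℝ} (hl : l ∈ Icc (0:ℝ) 1) (hclose : |l - genInv F t (1 - α)| ≤ ε) :
    |G t l - G t (genInv F t (1 - α))| ≤ β / (min α (1 - α) / 2) := by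
  set δ := min α (1 - α) / 2 with hδdef
  have hδ : 0 < δ := by
    have := hα.1; have := hα.2
    have : 0 < min α (1 - α) := lt_min (by linarith) (by linarith)
    simp only [hδdef]; linarith
  have hδα : 2 * δ ≤ α := by
    have := min_le_left α (1 - α); simp only [hδdef]; linarith
  have hδα' : 2 * δ ≤ 1 - α := by
    have := min_le_right α (1 - α); simp only [hδdef]; linarith
  obtain ⟨hcont, hmono, hF0, hF1⟩ := hA1 t
  have hum : (1 - α - β) ∈ Ioo (0:ℝ) 1 := ⟨by linarith, by linarith [hα.1]⟩
  have hup : (1 - α + β) ∈ Ioo (0:ℝ) 1 := ⟨by linarith [hα.2], by linarith⟩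
  have huc : (1 - α) ∈ Ioo (0:ℝ) 1 := ⟨by linarith [hα.2], by linarith [hα.1]⟩
  have hFqm : F t (genInv F t (1 - α - β)) = 1 - α - β :=
    exists_F_genInv hcont hmono hF0 hF1 hum
  have hFqp : F t (genInv F t (1 - α + β)) = 1 - α + β :=
    exists_F_genInv hcont hmono hF0 hF1 hup
  have hFstar : F t (genInv F t (1 - α)) = 1 - α :=
    exists_F_genInv hcont hmono hF0 hF1 huc
  have hstar_mem := genInv_mem_Icc F t (1 - α)
  have hqm_mem := genInv_mem_Icc F t (1 - α - β)
  have hqp_mem := genInv_mem_Icc F t (1 - α + β)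
  -- l is between the two quantiles
  have hlqm : genInv F t (1 - α - β) ≤ l := by
    refine hgood.1.trans (max_le ?_ hl.1)
    have := abs_le.1 hclose
    linarith [this.1]
  have hlqp : l ≤ genInv F t (1 - α + β) := by
    refine le_trans ?_ hgood.2
    have := abs_le.1 hclose
    exact le_min (by linarith [this.2]) hl.2
  have hFl_lo : 1 - α - β ≤ F t l := hFqm ▸ hmono.monotoneOn hqm_mem hl hlqm
  have hFl_hi : F t l ≤ 1 - α + β := hFqp ▸ hmono.monotoneOn hl hqp_mem hlqp
  -- rewrite via accFrac
  have hGl : G t l = accFrac F G t (F t l) := by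
    rw [accFrac, genInv_comp hmono hl]
  have hGs : G t (genInv F t (1 - α)) = accFrac F G t (1 - α) := by rw [accFrac]
  rw [hGl, hGs]
  have hCr : ∀ u ∈ Icc (0:ℝ) 1, accFrac F G t u ∈ Icc (0:ℝ) 1 := fun u _ =>
    hGrange t _ (genInv_mem_Icc F t u)
  have hlip := convex_lipschitz (hA3 t).1 hCr hδ
    (u := F t l) ⟨by linarith, by linarith⟩
    (v := 1 - α) ⟨by linarith, by linarith⟩
  refine hlip.trans ?_
  have habs : |F t l - (1 - α)| ≤ β := abs_le.2 ⟨by linarith, by linarith⟩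
  gcongr


lemma claimB
    (hA1 : ∀ t : ℝ, ContinuousOn (F t) (Icc 0 1) ∧ StrictMonoOn (F t) (Icc 0 1) ∧
      F t 0 = 0 ∧ F t 1 = 1)
    (hα : α ∈ Ioo (0 : ℝ) 1) {β : ℝ} (hβ0 : 0 < β)
    (hβδ : β ≤ min α (1 - α) / 2) (t : ℝ) :
    ∃ ε₀ > (0:ℝ), ∀ ε, 0 < ε → ε ≤ ε₀ → goodAt F α β ε t := by
  have hδ : 0 < min α (1 - α) / 2 := by
    have := hα.1; have := hα.2
    have : 0 < min α (1 - α) := lt_min (by linarith) (by linarith)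
    linarith
  have hδα : 2 * (min α (1 - α) / 2) ≤ α := by linarith [min_le_left α (1 - α)]
  have hδα' : 2 * (min α (1 - α) / 2) ≤ 1 - α := by linarith [min_le_right α (1 - α)]
  obtain ⟨hcont, hmono, hF0, hF1⟩ := hA1 t
  have hum : (1 - α - β) ∈ Ioo (0:ℝ) 1 := ⟨by linarith, by linarith [hα.1]⟩
  have hup : (1 - α + β) ∈ Ioo (0:ℝ) 1 := ⟨by linarith [hα.2], by linarith⟩
  have huc : (1 - α) ∈ Ioo (0:ℝ) 1 := ⟨by linarith [hα.2], by linarith [hα.1]⟩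
  have hFqm : F t (genInv F t (1 - α - β)) = 1 - α - β :=
    exists_F_genInv hcont hmono hF0 hF1 hum
  have hFqp : F t (genInv F t (1 - α + β)) = 1 - α + β :=
    exists_F_genInv hcont hmono hF0 hF1 hup
  have hFstar : F t (genInv F t (1 - α)) = 1 - α :=
    exists_F_genInv hcont hmono hF0 hF1 huc
  have hstar_mem := genInv_mem_Icc F t (1 - α)
  have hqm_mem := genInv_mem_Icc F t (1 - α - β)
  have hqp_mem := genInv_mem_Icc F t (1 - α + β)
  have h1 : genInv F t (1 - α - β) < genInv F t (1 - α) := by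
    by_contra h
    push_neg at h
    have := hmono.monotoneOn hstar_mem hqm_mem h
    rw [hFqm, hFstar] at this
    linarith
  have h2 : genInv F t (1 - α) < genInv F t (1 - α + β) := by
    by_contra h
    push_neg at h
    have := hmono.monotoneOn hqp_mem hstar_mem h
    rw [hFqp, hFstar] at this
    linarith
  refine ⟨min (genInv F t (1 - α) - genInv F t (1 - α - β))
      (genInv F t (1 - α + β) - genInv F t (1 - α)), lt_min (by linarith) (by linarith),
      fun ε hε0 hεle => ⟨?_, ?_⟩⟩
  · have := (le_min_iff.1 hεle).1
    exact le_max_of_le_left (by linarith)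
  · have := (le_min_iff.1 hεle).2
    exact min_le_of_left_le (by linarith)

end Claims

/-- **Asymptotic efficiency of learned conditional thresholds (Theorem 3, limit part).**
If the learned thresholds `λ̂_N` converge uniformly in probability to the oracle threshold
`λ*(x) = F_{ψ(x)}⁻¹(1-α)`, then the expected acceptance fraction of `λ̂_N` converges to that
of `λ*`, which is at most that of any marginal threshold `λ̄` with `E[F_{ψ(X)}(λ̄)] = 1-α`. -/
theorem learned_threshold_asymptotic_efficiency
    {𝓧 : Type*} [MeasurableSpace 𝓧]
    {Ω₁ Ω₂ : Type*} [MeasurableSpace Ω₁] [MeasurableSpace Ω₂]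
    (P₁ : Measure Ω₁) [IsProbabilityMeasure P₁]
    (P₂ : Measure Ω₂) [IsProbabilityMeasure P₂]
    (F G : ℝ → ℝ → ℝ)
    (hFrange : ∀ t : ℝ, ∀ l ∈ Icc (0 : ℝ) 1, F t l ∈ Icc (0 : ℝ) 1)
    (hGrange : ∀ t : ℝ, ∀ l ∈ Icc (0 : ℝ) 1, G t l ∈ Icc (0 : ℝ) 1)
    -- (A1)
    (hA1 : ∀ t : ℝ, ContinuousOn (F t) (Icc 0 1) ∧ StrictMonoOn (F t) (Icc 0 1) ∧
      F t 0 = 0 ∧ F t 1 = 1)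
    -- (A2)
    (hA2 : ∀ l ∈ Icc (0 : ℝ) 1, Antitone fun t => F t l)
    -- (A3)
    (hA3 : ∀ t : ℝ, ConvexOn ℝ (Icc 0 1) (accFrac F G t) ∧
      ∀ u ∈ Ioo (0 : ℝ) 1, DifferentiableAt ℝ (accFrac F G t) u)
    -- (A4)
    (hA4 : ∀ u ∈ Ioo (0 : ℝ) 1, Antitone fun t => deriv (accFrac F G t) u)
    (α : ℝ) (hα : α ∈ Ioo (0 : ℝ) 1)
    (ψ : 𝓧 → ℝ) (hψ : Measurable ψ)
    (X : Ω₂ → 𝓧) (hX : Measurable X)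
    (lamHat : ℕ → Ω₁ × 𝓧 → ℝ)
    (hlamHatMeas : ∀ N, Measurable (lamHat N))
    (hlamHatRange : ∀ N p, lamHat N p ∈ Icc (0 : ℝ) 1)
    -- uniform (over x) convergence in P₁-probability to the oracle threshold
    (hconv : ∀ ε > (0 : ℝ),
      Tendsto (fun N => P₁ {ω₁ | ∃ x : 𝓧, ε < |lamHat N (ω₁, x) - genInv F (ψ x) (1 - α)|})
        atTop (𝓝 0))
    (lamBar : ℝ) (hlamBar : lamBar ∈ Icc (0 : ℝ) 1)
    (hmean : ∫ ω₂, F (ψ (X ω₂)) lamBar ∂P₂ = 1 - α)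
    (hint0 : Integrable (fun ω₂ => F (ψ (X ω₂)) lamBar) P₂)
    (hintN : ∀ N, Integrable (fun p : Ω₁ × Ω₂ =>
      G (ψ (X p.2)) (lamHat N (p.1, X p.2))) (P₁.prod P₂))
    (hintStar : Integrable (fun ω₂ => G (ψ (X ω₂)) (genInv F (ψ (X ω₂)) (1 - α))) P₂)
    (hintBar : Integrable (fun ω₂ => G (ψ (X ω₂)) lamBar) P₂) :
    Tendsto (fun N => ∫ p, G (ψ (X p.2)) (lamHat N (p.1, X p.2)) ∂(P₁.prod P₂)) atTop
        (𝓝 (∫ ω₂, G (ψ (X ω₂)) (genInv F (ψ (X ω₂)) (1 - α)) ∂P₂)) ∧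
      ∫ ω₂, G (ψ (X ω₂)) (genInv F (ψ (X ω₂)) (1 - α)) ∂P₂ ≤
        ∫ ω₂, G (ψ (X ω₂)) lamBar ∂P₂ := by
  obtain ⟨hα0, hα1⟩ := hα
  have huc : (1 - α) ∈ Ioo (0:ℝ) 1 := ⟨by linarith, by linarith⟩
  have hTmeas : Measurable (fun ω₂ => ψ (X ω₂)) := hψ.comp hX
  have hCrange : ∀ t : ℝ, ∀ u : ℝ, accFrac F G t u ∈ Icc (0:ℝ) 1 := fun t u =>
    hGrange t _ (genInv_mem_Icc F t u)
  -- Part 2 : the inequality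
  have part2 : ∫ ω₂, G (ψ (X ω₂)) (genInv F (ψ (X ω₂)) (1 - α)) ∂P₂ ≤
      ∫ ω₂, G (ψ (X ω₂)) lamBar ∂P₂ := by
    set c : ℝ → ℝ := fun t => deriv (accFrac F G t) (1 - α) with hcdef
    have hcAnti : Antitone c := hA4 (1 - α) huc
    have hcMeas : Measurable c := hcAnti.measurable
    have hbAnti : Antitone (fun t => F t lamBar) := hA2 lamBar hlamBar
    have hbMeas : Measurable (fun t => F t lamBar) := hbAnti.measurable
    have hcBound : ∀ t, |c t| ≤ 1/(1-α) + 1/(1-(1-α)) := fun t =>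
      convex_deriv_abs_le (hA3 t).1 (fun u _ => hCrange t u) huc ((hA3 t).2 _ huc)
    have hbBound : ∀ t, |F t lamBar| ≤ 1 := fun t => abs_le.2
      ⟨by linarith [(hFrange t lamBar hlamBar).1], (hFrange t lamBar hlamBar).2⟩
    have hcomono : ∀ s u : Ω₂,
        0 ≤ (c (ψ (X s)) - c (ψ (X u))) * (F (ψ (X s)) lamBar - F (ψ (X u)) lamBar) := by
      intro s u
      rcases le_total (ψ (X s)) (ψ (X u)) with h | h
      · exact mul_nonneg (sub_nonneg.2 (hcAnti h)) (sub_nonneg.2 (hbAnti h))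
      · have h1 := sub_nonpos.2 (hcAnti h)
        have h2 := sub_nonpos.2 (hbAnti h)
        nlinarith
    have cheb := chebyshev_corr P₂ (f := fun ω₂ => c (ψ (X ω₂)))
      (g := fun ω₂ => F (ψ (X ω₂)) lamBar)
      (hcMeas.comp hTmeas) (hbMeas.comp hTmeas)
      (fun ω₂ => hcBound _) (fun ω₂ => hbBound _) hcomono
    rw [hmean] at cheb
    have hcInt : Integrable (fun ω₂ => c (ψ (X ω₂))) P₂ :=
      Integrable.mono' (integrable_const (1/(1-α) + 1/(1-(1-α))))
        (hcMeas.comp hTmeas).aestronglyMeasurable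
        (ae_of_all _ fun ω₂ => hcBound _)
    have hcbInt : Integrable (fun ω₂ => c (ψ (X ω₂)) * F (ψ (X ω₂)) lamBar) P₂ :=
      Integrable.mono' (integrable_const ((1/(1-α) + 1/(1-(1-α))) * 1))
        ((hcMeas.comp hTmeas).mul (hbMeas.comp hTmeas)).aestronglyMeasurable
        (ae_of_all _ fun ω₂ => by
          rw [Real.norm_eq_abs, abs_mul]
          nlinarith [hcBound (ψ (X ω₂)), hbBound (ψ (X ω₂)), abs_nonneg (c (ψ (X ω₂))),
            abs_nonneg (F (ψ (X ω₂)) lamBar)])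
    -- pointwise tangent bound
    have hpt : ∀ ω₂, G (ψ (X ω₂)) (genInv F (ψ (X ω₂)) (1 - α)) +
        (c (ψ (X ω₂)) * F (ψ (X ω₂)) lamBar - c (ψ (X ω₂)) * (1 - α)) ≤
        G (ψ (X ω₂)) lamBar := by
      intro ω₂
      set t := ψ (X ω₂)
      have h1 : G t lamBar = accFrac F G t (F t lamBar) := by
        rw [accFrac, genInv_comp (hA1 t).2.1 hlamBar]
      have h2 : G t (genInv F t (1 - α)) = accFrac F G t (1 - α) := by rw [accFrac]
      rw [h1, h2]
      have := convex_tangent_le (hA3 t).1 huc ((hA3 t).2 _ huc)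
        (u := F t lamBar) (hFrange t lamBar hlamBar)
      calc accFrac F G t (1 - α) + (c t * F t lamBar - c t * (1 - α))
          = accFrac F G t (1 - α) + deriv (accFrac F G t) (1 - α) * (F t lamBar - (1 - α)) := by
            ring
        _ ≤ accFrac F G t (F t lamBar) := this
    have hI1 : Integrable (fun ω₂ => c (ψ (X ω₂)) * F (ψ (X ω₂)) lamBar -
        c (ψ (X ω₂)) * (1 - α)) P₂ := hcbInt.sub (hcInt.mul_const (1 - α))
    have hLhsInt : Integrable (fun ω₂ => G (ψ (X ω₂)) (genInv F (ψ (X ω₂)) (1 - α)) +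
        (c (ψ (X ω₂)) * F (ψ (X ω₂)) lamBar - c (ψ (X ω₂)) * (1 - α))) P₂ :=
      hintStar.add hI1
    have hInt := integral_mono hLhsInt hintBar hpt
    rw [integral_add hintStar hI1, integral_sub hcbInt (hcInt.mul_const (1 - α)),
      integral_mul_const] at hInt
    nlinarith [cheb, hInt]
  refine ⟨?_, part2⟩
  -- Part 1 : the limit
  have hδ : 0 < min α (1 - α) / 2 := by
    have : 0 < min α (1 - α) := lt_min (by linarith) (by linarith)
    linarith
  have hgenMeas : ∀ u : ℝ, Measurable (fun t => genInv F t u) := fun u =>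
    (genInv_mono_t hA2 u).measurable
  have hBadMeas : ∀ β ε : ℝ, MeasurableSet {t : ℝ | ¬ goodAt F α β ε t} := by
    intro β ε
    have h1 : MeasurableSet {t : ℝ |
        genInv F t (1 - α - β) ≤ max (genInv F t (1 - α) - ε) 0} :=
      measurableSet_le (hgenMeas _) (((hgenMeas _).sub measurable_const).max measurable_const)
    have h2 : MeasurableSet {t : ℝ |
        min (genInv F t (1 - α) + ε) 1 ≤ genInv F t (1 - α + β)} :=
      measurableSet_le (((hgenMeas _).add measurable_const).min measurable_const) (hgenMeas _)
    exact (h1.inter h2).compl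
  -- push the target integral to the product space
  have hmap : (P₁.prod P₂).map Prod.snd = P₂ := by
    rw [Measure.map_snd_prod]; simp
  have hGsMM : AEStronglyMeasurable (fun ω₂ => G (ψ (X ω₂)) (genInv F (ψ (X ω₂)) (1 - α)))
      ((P₁.prod P₂).map Prod.snd) := by
    rw [hmap]; exact hintStar.aestronglyMeasurable
  have hsndInt : Integrable (fun p : Ω₁ × Ω₂ =>
      G (ψ (X p.2)) (genInv F (ψ (X p.2)) (1 - α))) (P₁.prod P₂) := by
    have := (integrable_map_measure hGsMM measurable_snd.aemeasurable).1
      (by rw [hmap]; exact hintStar)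
    exact this
  have hsndEq : ∫ ω₂, G (ψ (X ω₂)) (genInv F (ψ (X ω₂)) (1 - α)) ∂P₂ =
      ∫ p, G (ψ (X p.2)) (genInv F (ψ (X p.2)) (1 - α)) ∂(P₁.prod P₂) := by
    have h := integral_map (μ := P₁.prod P₂) measurable_snd.aemeasurable hGsMM
    rw [hmap] at h
    exact h
  rw [Metric.tendsto_atTop]
  intro η hη
  set β := min (min α (1 - α) / 2) ((min α (1 - α) / 2) * η / 4) with hβdef
  have hβ0 : 0 < β := lt_min hδ (by positivity)
  have hβδ : β ≤ min α (1 - α) / 2 := min_le_left _ _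
  have hβη : β / (min α (1 - α) / 2) ≤ η / 4 := by
    rw [div_le_iff₀ hδ]
    have := min_le_right (min α (1 - α) / 2) ((min α (1 - α) / 2) * η / 4)
    rw [← hβdef] at this
    nlinarith
  -- choose ε via the bad sets
  set Sk : ℕ → Set Ω₂ :=
    fun k => (fun ω₂ => ψ (X ω₂)) ⁻¹' {t | ¬ goodAt F α β (1/((k:ℝ)+1)) t} with hSkdef
  have hSkMeas : ∀ k, MeasurableSet (Sk k) := fun k => hTmeas (hBadMeas _ _)
  have hSkAnti : Antitone Sk := by
    intro k k' hkk'
    apply preimage_mono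
    intro t ht hgood
    refine ht (goodAt_mono ?_ hgood)
    have h1 : (0:ℝ) < (k:ℝ) + 1 := by positivity
    have h2 : ((k:ℝ) + 1) ≤ ((k':ℝ) + 1) := by
      have : (k:ℝ) ≤ (k':ℝ) := Nat.cast_le.2 hkk'
      linarith
    exact one_div_le_one_div_of_le h1 h2
  have hInterEmpty : ⋂ k, Sk k = ∅ := by
    rw [eq_empty_iff_forall_notMem]
    intro ω₂ hmem
    rw [mem_iInter] at hmem
    obtain ⟨ε₀, hε₀, hgood⟩ := claimB (F := F) hA1 ⟨hα0, hα1⟩ hβ0 hβδ (ψ (X ω₂))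
    obtain ⟨n, hn⟩ := exists_nat_one_div_lt hε₀
    exact hmem n (hgood (1/((n:ℝ)+1)) (by positivity) hn.le)
  have hTendS : Tendsto (fun k => P₂ (Sk k)) atTop (𝓝 0) := by
    have := tendsto_measure_iInter_atTop (μ := P₂)
      (fun k => (hSkMeas k).nullMeasurableSet) hSkAnti ⟨0, measure_ne_top _ _⟩
    rw [hInterEmpty, measure_empty] at this
    exact this
  have hη4 : (0:ENNReal) < ENNReal.ofReal (η/4) := ENNReal.ofReal_pos.2 (by positivity)
  obtain ⟨k, hk⟩ := (hTendS.eventually (gt_mem_nhds hη4)).exists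
  have hε0 : (0:ℝ) < 1/((k:ℝ)+1) := by positivity
  obtain ⟨N₀, hN₀⟩ := eventually_atTop.1 ((hconv _ hε0).eventually (gt_mem_nhds hη4))
  refine ⟨N₀, fun N hN => ?_⟩
  -- the bad calibration event
  have hPA : P₁ (toMeasurable P₁
      {ω₁ | ∃ x : 𝓧, 1/((k:ℝ)+1) < |lamHat N (ω₁, x) - genInv F (ψ x) (1 - α)|}) <
      ENNReal.ofReal (η/4) := by
    rw [measure_toMeasurable]
    exact hN₀ N hN
  have hmeasA : MeasurableSet (toMeasurable P₁
      {ω₁ | ∃ x : 𝓧, 1/((k:ℝ)+1) < |lamHat N (ω₁, x) - genInv F (ψ x) (1 - α)|}) :=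
    measurableSet_toMeasurable _ _
  -- the difference function and the dominating function
  have hdiffInt : Integrable (fun p : Ω₁ × Ω₂ =>
      G (ψ (X p.2)) (lamHat N (p.1, X p.2)) -
      G (ψ (X p.2)) (genInv F (ψ (X p.2)) (1 - α))) (P₁.prod P₂) := (hintN N).sub hsndInt
  have hI1int : Integrable (fun p : Ω₁ × Ω₂ => Set.indicator
      ((toMeasurable P₁ {ω₁ | ∃ x : 𝓧, 1/((k:ℝ)+1) <
        |lamHat N (ω₁, x) - genInv F (ψ x) (1 - α)|}) ×ˢ (univ : Set Ω₂))
      (fun _ => (1:ℝ)) p) (P₁.prod P₂) :=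
    (integrable_const 1).indicator (hmeasA.prod MeasurableSet.univ)
  have hI3int : Integrable (fun p : Ω₁ × Ω₂ => Set.indicator
      ((univ : Set Ω₁) ×ˢ Sk k) (fun _ => (1:ℝ)) p) (P₁.prod P₂) :=
    (integrable_const 1).indicator (MeasurableSet.univ.prod (hSkMeas k))
  have hbndInt : Integrable (fun p : Ω₁ × Ω₂ =>
      Set.indicator ((toMeasurable P₁ {ω₁ | ∃ x : 𝓧, 1/((k:ℝ)+1) <
        |lamHat N (ω₁, x) - genInv F (ψ x) (1 - α)|}) ×ˢ (univ : Set Ω₂))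
        (fun _ => (1:ℝ)) p + β / (min α (1 - α) / 2) +
      Set.indicator ((univ : Set Ω₁) ×ˢ Sk k) (fun _ => (1:ℝ)) p) (P₁.prod P₂) :=
    (hI1int.add (integrable_const _)).add hI3int
  -- pointwise bound
  have hpoint : ∀ p : Ω₁ × Ω₂,
      |G (ψ (X p.2)) (lamHat N (p.1, X p.2)) -
        G (ψ (X p.2)) (genInv F (ψ (X p.2)) (1 - α))| ≤
      Set.indicator ((toMeasurable P₁ {ω₁ | ∃ x : 𝓧, 1/((k:ℝ)+1) <
        |lamHat N (ω₁, x) - genInv F (ψ x) (1 - α)|}) ×ˢ (univ : Set Ω₂))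
        (fun _ => (1:ℝ)) p + β / (min α (1 - α) / 2) +
      Set.indicator ((univ : Set Ω₁) ×ˢ Sk k) (fun _ => (1:ℝ)) p := by
    intro p
    have hG1 : |G (ψ (X p.2)) (lamHat N (p.1, X p.2)) -
        G (ψ (X p.2)) (genInv F (ψ (X p.2)) (1 - α))| ≤ 1 := by
      have h1 := hGrange (ψ (X p.2)) _ (hlamHatRange N (p.1, X p.2))
      have h2 := hGrange (ψ (X p.2)) _ (genInv_mem_Icc F (ψ (X p.2)) (1 - α))
      exact abs_le.2 ⟨by linarith [h1.1, h2.2], by linarith [h1.2, h2.1]⟩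
    have i1 : (0:ℝ) ≤ Set.indicator ((toMeasurable P₁ {ω₁ | ∃ x : 𝓧, 1/((k:ℝ)+1) <
        |lamHat N (ω₁, x) - genInv F (ψ x) (1 - α)|}) ×ˢ (univ : Set Ω₂))
        (fun _ => (1:ℝ)) p := Set.indicator_nonneg (fun _ _ => zero_le_one) p
    have i3 : (0:ℝ) ≤ Set.indicator ((univ : Set Ω₁) ×ˢ Sk k)
        (fun _ => (1:ℝ)) p := Set.indicator_nonneg (fun _ _ => zero_le_one) p
    have iβ : (0:ℝ) ≤ β / (min α (1 - α) / 2) := le_of_lt (by positivity)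
    by_cases hp1 : p.1 ∈ toMeasurable P₁
        {ω₁ | ∃ x : 𝓧, 1/((k:ℝ)+1) < |lamHat N (ω₁, x) - genInv F (ψ x) (1 - α)|}
    · have e1 : Set.indicator ((toMeasurable P₁ {ω₁ | ∃ x : 𝓧, 1/((k:ℝ)+1) <
          |lamHat N (ω₁, x) - genInv F (ψ x) (1 - α)|}) ×ˢ (univ : Set Ω₂))
          (fun _ => (1:ℝ)) p = 1 :=
        Set.indicator_of_mem (Set.mk_mem_prod hp1 (mem_univ _)) _
      rw [e1]
      linarith
    · have hp1' : p.1 ∉ {ω₁ | ∃ x : 𝓧, 1/((k:ℝ)+1) <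
          |lamHat N (ω₁, x) - genInv F (ψ x) (1 - α)|} :=
        fun h => hp1 (subset_toMeasurable _ _ h)
      have hclose : |lamHat N (p.1, X p.2) - genInv F (ψ (X p.2)) (1 - α)| ≤ 1/((k:ℝ)+1) := by
        simp only [mem_setOf_eq, not_exists, not_lt] at hp1'
        exact hp1' (X p.2)
      by_cases hp2 : p.2 ∈ Sk k
      · have e3 : Set.indicator ((univ : Set Ω₁) ×ˢ Sk k) (fun _ => (1:ℝ)) p = 1 :=
          Set.indicator_of_mem (Set.mk_mem_prod (mem_univ _) hp2) _
        rw [e3]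
        linarith
      · have hgood : goodAt F α β (1/((k:ℝ)+1)) (ψ (X p.2)) := by
          simp only [hSkdef, mem_preimage, mem_setOf_eq] at hp2
          exact not_not.mp hp2
        have := claimA hFrange hGrange hA1 hA3 ⟨hα0, hα1⟩ hβ0 hβδ hgood
          (hlamHatRange N (p.1, X p.2)) hclose
        linarith
  -- integrate the bound
  have hmono := integral_mono hdiffInt.abs hbndInt hpoint
  have hbndval : ∫ p, (Set.indicator ((toMeasurable P₁ {ω₁ | ∃ x : 𝓧, 1/((k:ℝ)+1) <
        |lamHat N (ω₁, x) - genInv F (ψ x) (1 - α)|}) ×ˢ (univ : Set Ω₂))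
        (fun _ => (1:ℝ)) p + β / (min α (1 - α) / 2) +
      Set.indicator ((univ : Set Ω₁) ×ˢ Sk k) (fun _ => (1:ℝ)) p) ∂(P₁.prod P₂) =
      (P₁ (toMeasurable P₁ {ω₁ | ∃ x : 𝓧, 1/((k:ℝ)+1) <
        |lamHat N (ω₁, x) - genInv F (ψ x) (1 - α)|})).toReal + β / (min α (1 - α) / 2) +
      (P₂ (Sk k)).toReal := by
    have hI12 : Integrable (fun p : Ω₁ × Ω₂ =>
        Set.indicator ((toMeasurable P₁ {ω₁ | ∃ x : 𝓧, 1/((k:ℝ)+1) <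
          |lamHat N (ω₁, x) - genInv F (ψ x) (1 - α)|}) ×ˢ (univ : Set Ω₂))
          (fun _ => (1:ℝ)) p + β / (min α (1 - α) / 2)) (P₁.prod P₂) :=
      hI1int.add (integrable_const _)
    rw [integral_add hI12 hI3int,
      integral_add hI1int (integrable_const _), integral_indicator_const,
      integral_indicator_const, integral_const]
    · simp [Measure.prod_prod, measure_univ, measureReal_def]
    · exact MeasurableSet.univ.prod (hSkMeas k)
    · exact hmeasA.prod MeasurableSet.univ
  have hP1le : (P₁ (toMeasurable P₁ {ω₁ | ∃ x : 𝓧, 1/((k:ℝ)+1) <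
      |lamHat N (ω₁, x) - genInv F (ψ x) (1 - α)|})).toReal ≤ η/4 := by
    have := (ENNReal.toReal_lt_toReal (measure_ne_top _ _) ENNReal.ofReal_ne_top).2 hPA
    rw [ENNReal.toReal_ofReal (by positivity : (0:ℝ) ≤ η/4)] at this
    exact this.le
  have hP2le : (P₂ (Sk k)).toReal ≤ η/4 := by
    have := (ENNReal.toReal_lt_toReal (measure_ne_top _ _) ENNReal.ofReal_ne_top).2 hk
    rw [ENNReal.toReal_ofReal (by positivity : (0:ℝ) ≤ η/4)] at this
    exact this.le
  -- conclude
  rw [Real.dist_eq, hsndEq, ← integral_sub (hintN N) hsndInt]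
  calc |∫ p, (G (ψ (X p.2)) (lamHat N (p.1, X p.2)) -
        G (ψ (X p.2)) (genInv F (ψ (X p.2)) (1 - α))) ∂(P₁.prod P₂)|
      ≤ ∫ p, |G (ψ (X p.2)) (lamHat N (p.1, X p.2)) -
        G (ψ (X p.2)) (genInv F (ψ (X p.2)) (1 - α))| ∂(P₁.prod P₂) := by
        simpa [Real.norm_eq_abs] using
          norm_integral_le_integral_norm (μ := P₁.prod P₂)
            (f := fun p : Ω₁ × Ω₂ => G (ψ (X p.2)) (lamHat N (p.1, X p.2)) -
              G (ψ (X p.2)) (genInv F (ψ (X p.2)) (1 - α)))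
    _ ≤ _ := hmono
    _ = _ := hbndval
    _ < η := by linarith
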